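/- Let v^n denote the alternating word of length n over {L,R} beginning with L (v^n = LRLR⋯, with v^0 = ε the empty word). Then D²[P_{v^n}] = 2n/3 + 8/9 + (−1)^n/(9·2^n) for every n ∈ ℕ, and for every word w of length n over {L,R}, D²[P_w] ≤ D²[P_{v^n}]. -/

import Mathlib

/-- The probability mass functions `P t` on ℤ, defined by
`P 1 = δ₀`, `P (2t) = P t`, `P (2t+1) d = ½ P (t+1) (d+1) + ½ P t (d-1)`. -/
noncomputable def P : ℕ → ℤ → ℝ
  | 0, _ => 0
  | 1, d => if d = 0 then 1 else 0
  | (n+2), d =>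
      if h : (n + 2) % 2 = 0 then P ((n+2)/2) d
      else (1/2) * P ((n+2)/2 + 1) (d+1) + (1/2) * P ((n+2)/2) (d-1)
  decreasing_by all_goals omega

/-- Letters of the alphabet. -/
inductive LR | L | R
deriving DecidableEq

/-- One step of the identification of words with odd integers: `L : t ↦ 2t-1`, `R : t ↦ 2t+1`. -/
def LRstep (t : ℕ) : LR → ℕ
  | LR.L => 2 * t - 1
  | LR.R => 2 * t + 1

/-- The odd integer associated to a word over `{L,R}`, starting from 3. -/
def hword (w : List LR) : ℕ := w.foldl LRstep 3

/-- The variance `D²[p] = ∑ k² p(k)` of a mean-zero probability mass function on ℤ. -/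
noncomputable def var (p : ℤ → ℝ) : ℝ := ∑' k : ℤ, (k : ℝ) ^ 2 * p k

/-- The alternating word `v^n = LRLR⋯` of length `n` (with `v^0 = ε`). -/
def altWord (n : ℕ) : List LR :=
  (List.range n).map fun i => if i % 2 = 0 then LR.L else LR.R

/-! ### Auxiliary lemmas -/

lemma P_one_def (d : ℤ) : P 1 d = if d = 0 then 1 else 0 := by simp [P]

lemma P_even (t : ℕ) (ht : 1 ≤ t) (d : ℤ) : P (2*t) d = P t d := by
  obtain ⟨m, rfl⟩ := Nat.exists_eq_add_of_le ht
  rw [show 2*(1+m) = (2*m)+2 by ring, P]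
  have h : (2*m+2) % 2 = 0 := by omega
  rw [dif_pos h]
  congr 1
  omega

lemma P_odd (t : ℕ) (ht : 1 ≤ t) (d : ℤ) :
    P (2*t+1) d = (1/2) * P (t+1) (d+1) + (1/2) * P t (d-1) := by
  obtain ⟨m, rfl⟩ := Nat.exists_eq_add_of_le ht
  rw [show 2*(1+m)+1 = (2*m+1)+2 by ring, P]
  have h : ¬ (2*m+1+2) % 2 = 0 := by omega
  rw [dif_neg h]
  have h1 : (2*m+1+2)/2 + 1 = 1+m+1 := by omega
  have h2 : (2*m+1+2)/2 = 1+m := by omega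
  rw [h1, h2]

lemma P_support : ∀ t : ℕ, ∀ d : ℤ, P t d ≠ 0 → d.natAbs ≤ t := by
  intro t
  induction t using Nat.strong_induction_on with
  | _ t IH =>
    match t with
    | 0 => intro d h; simp [P] at h
    | 1 => intro d h; simp [P] at h; subst h; simp
    | (n+2) =>
      intro d h
      rw [P] at h
      by_cases hp : (n+2) % 2 = 0
      · rw [dif_pos hp] at h
        have := IH ((n+2)/2) (by omega) d h
        omega
      · rw [dif_neg hp] at h
        rcases (by by_contra hc; push_neg at hc; rw [hc.1, hc.2] at h; simp at h :
            P ((n+2)/2+1) (d+1) ≠ 0 ∨ P ((n+2)/2) (d-1) ≠ 0) with h1 | h1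
        · have := IH ((n+2)/2+1) (by omega) (d+1) h1
          omega
        · have := IH ((n+2)/2) (by omega) (d-1) h1
          omega

lemma summable_P_mul (t : ℕ) (g : ℤ → ℝ) (c : ℤ) :
    Summable (fun d : ℤ => g d * P t (d + c)) := by
  apply summable_of_ne_finset_zero (s := Finset.Icc (-(t:ℤ) - c.natAbs) (t + c.natAbs))
  intro b hb
  have : P t (b + c) = 0 := by
    by_contra h
    have := P_support t _ h
    simp only [Finset.mem_Icc] at hb
    omega
  rw [this, mul_zero]

lemma summable_P_mul' (t : ℕ) (g : ℤ → ℝ) : Summable (fun d : ℤ => g d * P t d) := by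
  simpa using summable_P_mul t g 0

lemma summable_P (t : ℕ) : Summable (fun d : ℤ => P t d) := by
  simpa using summable_P_mul' t (fun _ => 1)

lemma tsum_P_even (s : ℕ) (hs : 1 ≤ s) (g : ℤ → ℝ) :
    ∑' d : ℤ, g d * P (2*s) d = ∑' d : ℤ, g d * P s d := by
  congr 1; funext d; rw [P_even s hs]

lemma tsum_P_odd (s : ℕ) (hs : 1 ≤ s) (g : ℤ → ℝ) :
    ∑' d : ℤ, g d * P (2*s+1) d
      = 1/2 * (∑' d : ℤ, g (d - 1) * P (s+1) d) + 1/2 * (∑' d : ℤ, g (d + 1) * P s d) := by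
  have e1 : ∑' d : ℤ, g d * P (s+1) (d + 1) = ∑' d : ℤ, g (d - 1) * P (s+1) d := by
    rw [← (Equiv.subRight (1:ℤ)).tsum_eq (fun d => g d * P (s+1) (d+1))]
    simp [Equiv.subRight]
  have e2 : ∑' d : ℤ, g d * P s (d + (-1)) = ∑' d : ℤ, g (d + 1) * P s d := by
    rw [← (Equiv.addRight (1:ℤ)).tsum_eq (fun d => g d * P s (d + (-1)))]
    simp [Equiv.addRight]
  calc ∑' d : ℤ, g d * P (2*s+1) d
      = ∑' d : ℤ, (1/2 * (g d * P (s+1) (d+1)) + 1/2 * (g d * P s (d + (-1)))) := by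
        congr 1; funext d; rw [P_odd s hs]; ring_nf
    _ = 1/2 * (∑' d : ℤ, g d * P (s+1) (d+1)) + 1/2 * (∑' d : ℤ, g d * P s (d + (-1))) := by
        rw [Summable.tsum_add (((summable_P_mul (s+1) g 1)).mul_left _)
          (((summable_P_mul s g (-1))).mul_left _), tsum_mul_left, tsum_mul_left]
    _ = _ := by rw [e1, e2]

lemma P_mass : ∀ t : ℕ, 1 ≤ t → ∑' d : ℤ, P t d = 1 := by
  intro t
  induction t using Nat.strong_induction_on with
  | _ t IH =>
    intro ht
    match t, ht with
    | 1, _ => simp only [P_one_def]; exact tsum_ite_eq (0:ℤ) (fun _ => (1:ℝ))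
    | (n+2), _ =>
      have key : ∑' d : ℤ, (1:ℝ) * P (n+2) d = 1 := by
        rcases Nat.even_or_odd (n+2) with ⟨s, hs⟩ | ⟨s, hs⟩
        · have hs1 : 1 ≤ s := by omega
          rw [show n+2 = 2*s by omega, tsum_P_even s hs1]
          simp only [one_mul]
          exact IH s (by omega) hs1
        · have hs1 : 1 ≤ s := by omega
          rw [show n+2 = 2*s+1 by omega, tsum_P_odd s hs1]
          have m1 : ∑' d : ℤ, P (s+1) d = 1 := IH (s+1) (by omega) (by omega)
          have m2 : ∑' d : ℤ, P s d = 1 := IH s (by omega) hs1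
          simp only [one_mul] at *
          rw [m1, m2]; norm_num
      simpa using key

lemma tsum_shift_mean (t : ℕ) (ht : 1 ≤ t) (c : ℝ) :
    ∑' d : ℤ, (((d:ℝ) + c)) * P t d = c + ∑' d : ℤ, (d:ℝ) * P t d := by
  have h1 : (fun d : ℤ => ((d:ℝ) + c) * P t d)
      = fun d : ℤ => (d:ℝ) * P t d + c * P t d := by funext d; ring
  rw [h1, Summable.tsum_add (summable_P_mul' t _) ((summable_P t).mul_left c), tsum_mul_left,
    P_mass t ht]
  ring

lemma P_mean : ∀ t : ℕ, 1 ≤ t → ∑' d : ℤ, (d:ℝ) * P t d = 0 := by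
  intro t
  induction t using Nat.strong_induction_on with
  | _ t IH =>
    intro ht
    match t, ht with
    | 1, _ =>
      have : (fun d : ℤ => (d:ℝ) * P 1 d) = fun _ => 0 := by
        funext d; rw [P_one_def]; by_cases h : d = 0 <;> simp [h]
      rw [this, tsum_zero]
    | (n+2), _ =>
      rcases Nat.even_or_odd (n+2) with ⟨s, hs⟩ | ⟨s, hs⟩
      · have hs1 : 1 ≤ s := by omega
        rw [show n+2 = 2*s by omega, tsum_P_even s hs1 (fun d => (d:ℝ))]
        exact IH s (by omega) hs1
      · have hs1 : 1 ≤ s := by omega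
        rw [show n+2 = 2*s+1 by omega, tsum_P_odd s hs1 (fun d => (d:ℝ))]
        have e1 : ∑' d : ℤ, (((d:ℤ) - 1 : ℤ):ℝ) * P (s+1) d = -1 := by
          have := tsum_shift_mean (s+1) (by omega) (-1)
          rw [IH (s+1) (by omega) (by omega)] at this
          simpa [sub_eq_add_neg] using this
        have e2 : ∑' d : ℤ, (((d:ℤ) + 1 : ℤ):ℝ) * P s d = 1 := by
          have := tsum_shift_mean s hs1 1
          rw [IH s (by omega) hs1] at this
          simpa using this
        rw [e1, e2]; norm_num

lemma tsum_shift_sq (t : ℕ) (ht : 1 ≤ t) (c : ℝ) :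
    ∑' d : ℤ, (((d:ℝ) + c)) ^ 2 * P t d = var (P t) + c ^ 2 := by
  have h1 : (fun d : ℤ => ((d:ℝ) + c) ^ 2 * P t d)
      = fun d : ℤ => (d:ℝ)^2 * P t d + ((2*c) * ((d:ℝ) * P t d) + c^2 * P t d) := by
    funext d; ring
  rw [h1, Summable.tsum_add (summable_P_mul' t _)
      (((summable_P_mul' t (fun d => (d:ℝ))).mul_left _).add ((summable_P t).mul_left _)),
    Summable.tsum_add ((summable_P_mul' t (fun d => (d:ℝ))).mul_left _) ((summable_P t).mul_left _),
    tsum_mul_left, tsum_mul_left, P_mass t ht, P_mean t ht, var]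
  ring

lemma var_even (s : ℕ) (hs : 1 ≤ s) : var (P (2*s)) = var (P s) :=
  tsum_P_even s hs _

lemma var_odd (s : ℕ) (hs : 1 ≤ s) :
    var (P (2*s+1)) = 1/2 * var (P (s+1)) + 1/2 * var (P s) + 1 := by
  rw [var, tsum_P_odd s hs (fun d => (d:ℝ)^2)]
  have e1 : ∑' d : ℤ, (((d:ℤ) - 1 : ℤ):ℝ)^2 * P (s+1) d = var (P (s+1)) + 1 := by
    have := tsum_shift_sq (s+1) (by omega) (-1)
    simpa [sub_eq_add_neg] using this
  have e2 : ∑' d : ℤ, (((d:ℤ) + 1 : ℤ):ℝ)^2 * P s d = var (P s) + 1 := by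
    have := tsum_shift_sq s hs 1
    simpa using this
  rw [e1, e2]; ring

lemma var_one : var (P 1) = 0 := by
  have : (fun k : ℤ => (k:ℝ)^2 * P 1 k) = fun _ => 0 := by
    funext d; rw [P_one_def]; by_cases h : d = 0 <;> simp [h]
  rw [var, this, tsum_zero]

/-! ### The state transition on pairs of variances -/

/-- state transition -/
noncomputable def F (p : ℝ × ℝ) : LR → ℝ × ℝ
  | LR.L => (p.1, p.1/2 + p.2/2 + 1)
  | LR.R => (p.1/2 + p.2/2 + 1, p.2)

noncomputable def phi : ℕ → ℝ
  | 0 => 0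
  | (k+1) => 2*k/3 + 8/9 + (-1:ℝ)^k/(9*2^k)

lemma hword_append (w : List LR) (c : LR) : hword (w ++ [c]) = LRstep (hword w) c := by
  simp [hword]

lemma hword_odd (w : List LR) : ∃ s : ℕ, 1 ≤ s ∧ hword w = 2*s+1 := by
  induction w using List.reverseRecOn with
  | nil => exact ⟨1, by norm_num, rfl⟩
  | append_singleton w c IH =>
    obtain ⟨s, hs, hw⟩ := IH
    rw [hword_append, hw]
    cases c with
    | L => exact ⟨2*s, by omega, by simp [LRstep]; omega⟩
    | R => exact ⟨2*s+1, by omega, by simp [LRstep]⟩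

lemma state_eq (w : List LR) : ∀ s : ℕ, 1 ≤ s → hword w = 2*s+1 →
    w.foldl F (0,0) = (var (P s), var (P (s+1))) := by
  induction w using List.reverseRecOn with
  | nil =>
    intro s hs h
    have : s = 1 := by simp [hword] at h; omega
    subst this
    have h2 : var (P 2) = 0 := by
      have := var_even 1 (by norm_num); rw [var_one] at this; simpa using this
    simp [var_one, h2]
  | append_singleton w c IH =>
    intro s hs h
    obtain ⟨u, hu, hw⟩ := hword_odd w
    rw [List.foldl_append, IH u hu hw]
    rw [hword_append, hw] at h
    cases c with
    | L =>
      simp only [LRstep] at h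
      have hs2 : s = 2*u := by omega
      subst hs2
      simp only [List.foldl, F]
      rw [Prod.ext_iff]
      refine ⟨?_, ?_⟩
      · simp [var_even u hu]
      · simp [var_odd u hu]; ring
    | R =>
      simp only [LRstep] at h
      have hs2 : s = 2*u+1 := by omega
      subst hs2
      simp only [List.foldl, F]
      rw [Prod.ext_iff]
      refine ⟨?_, ?_⟩
      · simp [var_odd u hu]; ring
      · simp only []
        rw [show 2*u+1+1 = 2*(u+1) by ring, var_even (u+1) (by omega)]

lemma var_of_state (w : List LR) :
    var (P (hword w)) = (w.foldl F (0,0)).1/2 + (w.foldl F (0,0)).2/2 + 1 := by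
  obtain ⟨s, hs, hw⟩ := hword_odd w
  rw [hw, state_eq w s hs hw, var_odd s hs]
  ring

/-! ### Properties of phi -/

lemma phi_rec (n : ℕ) : phi (n+1) = phi (n-1)/2 + phi n/2 + 1 := by
  match n with
  | 0 => norm_num [phi]
  | 1 => norm_num [phi]
  | (k+2) =>
    show phi (k+3) = phi (k+1)/2 + phi (k+2)/2 + 1
    simp only [phi]
    have h2 : (2:ℝ)^k ≠ 0 := by positivity
    push_cast
    rw [pow_succ, pow_succ, pow_succ, pow_succ]
    field_simp
    ring

lemma phi_bound (k : ℕ) : 2*(k:ℝ)/3 + 7/9 ≤ phi (k+1) ∧ phi (k+1) ≤ 2*(k:ℝ)/3 + 1 := by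
  have h1 : (1:ℝ) ≤ 2^k := one_le_pow₀ (by norm_num)
  have h2 : (0:ℝ) < 2^k := by positivity
  have habs : |(-1:ℝ)^k/(9*2^k)| ≤ 1/9 := by
    rw [abs_div, abs_pow, abs_neg, abs_one, one_pow]
    rw [abs_of_pos (by positivity)]
    rw [div_le_div_iff₀ (by positivity) (by norm_num)]
    nlinarith
  have := abs_le.mp habs
  simp only [phi]
  constructor <;> nlinarith [this.1, this.2]

lemma phi_mono (n : ℕ) : phi n ≤ phi (n+1) := by
  match n with
  | 0 => norm_num [phi]
  | (k+1) =>
    have h1 := (phi_bound k).2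
    have h2 := (phi_bound (k+1)).1
    push_cast at h2
    linarith

/-! ### The alternating word -/

lemma altWord_succ (n : ℕ) :
    altWord (n+1) = altWord n ++ [if n % 2 = 0 then LR.L else LR.R] := by
  simp [altWord, List.range_succ]

lemma alt_state (n : ℕ) :
    (altWord n).foldl F (0,0)
      = if n % 2 = 0 then (phi n, phi (n-1)) else (phi (n-1), phi n) := by
  induction n with
  | zero => simp [altWord, phi]
  | succ n IH =>
    rw [altWord_succ, List.foldl_append, IH]
    have hs : (n+1) - 1 = n := by omega
    by_cases h : n % 2 = 0
    · have h' : ¬ (n+1) % 2 = 0 := by omega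
      simp only [if_pos h, if_neg h', List.foldl, F, hs]
      exact Prod.ext rfl (by rw [phi_rec n]; ring)
    · have h' : (n+1) % 2 = 0 := by omega
      simp only [if_neg h, if_pos h', List.foldl, F, hs]
      exact Prod.ext (by rw [phi_rec n]) rfl

lemma state_le (w : List LR) :
    (w.foldl F (0,0)).1 ≤ phi w.length ∧ (w.foldl F (0,0)).2 ≤ phi w.length ∧
    (w.foldl F (0,0)).1 + (w.foldl F (0,0)).2 ≤ phi w.length + phi (w.length - 1) := by
  induction w using List.reverseRecOn with
  | nil => simp [phi]
  | append_singleton w c IH =>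
    obtain ⟨ih1, ih2, ih3⟩ := IH
    rw [List.foldl_append]
    have hlen : (w ++ [c]).length = w.length + 1 := by simp
    rw [hlen]
    set n := w.length with hn
    set p := w.foldl F (0,0) with hp
    have hrec : phi (n+1) = phi (n-1)/2 + phi n/2 + 1 := phi_rec n
    have hmono : phi n ≤ phi (n+1) := phi_mono n
    have hsimp : (n+1) - 1 = n := by omega
    rw [hsimp]
    cases c with
    | L =>
      simp only [List.foldl, F]
      refine ⟨by linarith, by linarith, by linarith⟩
    | R =>
      simp only [List.foldl, F]
      refine ⟨by linarith, by linarith, by linarith⟩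

/-! ### Main theorem -/

/-- `D²[P_{v^n}] = 2n/3 + 8/9 + (-1)^n / (9 · 2^n)`, and the alternating word maximizes
the variance among all words of length `n`. -/
theorem variance_alternating_word (n : ℕ) :
    var (P (hword (altWord n)))
      = 2 * (n : ℝ) / 3 + 8 / 9 + (-1 : ℝ) ^ n / (9 * 2 ^ n) ∧
    (∀ w : List LR, w.length = n → var (P (hword w)) ≤ var (P (hword (altWord n)))) := by
  have hval : var (P (hword (altWord n))) = phi (n-1)/2 + phi n/2 + 1 := by
    rw [var_of_state, alt_state]
    by_cases h : n % 2 = 0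
    · rw [if_pos h]; ring
    · rw [if_neg h]
  constructor
  · rw [hval, ← phi_rec n]
    simp [phi]
  · intro w hw
    have := state_le w
    rw [hw] at this
    rw [hval, var_of_state w]
    linarith [this.2.2]
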